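/- If ρ₁, …, ρ_k are perfectly distinguishable states (i.e., there exists a POVM E with tr[ρ_i E(j)] = δ_{ij}), then any two observables A and B are {ρ₁,…,ρ_k}-compatible: the POVM G(x,y) := Σ_i tr[ρ_i A(x)] tr[ρ_i B(y)] E(i) has marginals agreeing with A and B on each ρ_j. -/

import Mathlib

open Matrix ComplexOrder
noncomputable section

def IsPOVM {ι : Type*} [Fintype ι] {n : Type*} [Fintype n] [DecidableEq n]
    (G : ι → Matrix n n ℂ) : Prop :=
  (∀ i, (G i).PosSemidef) ∧ ∑ i, G i = 1

def IsState {n : Type*} [Fintype n] [DecidableEq n] (ρ : Matrix n n ℂ) : Prop :=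
  ρ.PosSemidef ∧ ρ.trace = 1

lemma psd_diag_nonneg {n : Type*} [Fintype n] [DecidableEq n] {M : Matrix n n ℂ}
    (h : M.PosSemidef) (i : n) : 0 ≤ M i i := by
  exact h.diag_nonneg

lemma psd_trace_nonneg {n : Type*} [Fintype n] [DecidableEq n] {M : Matrix n n ℂ}
    (h : M.PosSemidef) : 0 ≤ M.trace :=
  Finset.sum_nonneg fun i _ => psd_diag_nonneg h i

lemma trace_mul_psd_nonneg {n : Type*} [Fintype n] [DecidableEq n] {P Q : Matrix n n ℂ}
    (hP : P.PosSemidef) (hQ : Q.PosSemidef) : 0 ≤ (P * Q).trace := by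
  obtain ⟨B, rfl⟩ : ∃ B : Matrix n n ℂ, P = Bᴴ * B := by
    open scoped MatrixOrder in
    obtain ⟨X, hX, -, hXP⟩ :=
      CFC.exists_sqrt_of_isSelfAdjoint_of_quasispectrumRestricts hP.isHermitian
        (QuasispectrumRestricts.nnreal_of_nonneg hP.nonneg)
    refine ⟨X, ?_⟩
    rw [← hXP, ← Matrix.star_eq_conjTranspose, hX.star_eq]
  rw [Matrix.mul_assoc, Matrix.trace_mul_comm]
  exact psd_trace_nonneg (hQ.mul_mul_conjTranspose_same B)

lemma psd_smul {n : Type*} [Fintype n] [DecidableEq n] {M : Matrix n n ℂ} {c : ℂ}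
    (hM : M.PosSemidef) (hc : 0 ≤ c) : (c • M).PosSemidef := by
  exact hM.smul hc

theorem distinguishable_states_compatible {d k : ℕ} {X Y : Type*} [Fintype X] [Fintype Y]
    (ρ : Fin k → Matrix (Fin d) (Fin d) ℂ) (hρ : ∀ i, IsState (ρ i))
    (E : Fin k → Matrix (Fin d) (Fin d) ℂ) (hE : IsPOVM E)
    (hdist : ∀ i j, (ρ i * E j).trace = if i = j then 1 else 0)
    (A : X → Matrix (Fin d) (Fin d) ℂ) (B : Y → Matrix (Fin d) (Fin d) ℂ)
    (hA : IsPOVM A) (hB : IsPOVM B) :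
    IsPOVM (fun p : X × Y =>
      ∑ i, ((ρ i * A p.1).trace * (ρ i * B p.2).trace) • E i) ∧
    ∀ j, (∀ x, ∑ y, (ρ j * (∑ i, ((ρ i * A x).trace * (ρ i * B y).trace) • E i)).trace
            = (ρ j * A x).trace) ∧
         (∀ y, ∑ x, (ρ j * (∑ i, ((ρ i * A x).trace * (ρ i * B y).trace) • E i)).trace
            = (ρ j * B y).trace) := by
  have hcsum : ∀ i, ∑ x, (ρ i * A x).trace = 1 := by
    intro i
    rw [← Matrix.trace_sum, ← Finset.mul_sum, hA.2, mul_one, (hρ i).2]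
  have hdsum : ∀ i, ∑ y, (ρ i * B y).trace = 1 := by
    intro i
    rw [← Matrix.trace_sum, ← Finset.mul_sum, hB.2, mul_one, (hρ i).2]
  have hterm : ∀ (j : Fin k) x y,
      (ρ j * (∑ i, ((ρ i * A x).trace * (ρ i * B y).trace) • E i)).trace
        = (ρ j * A x).trace * (ρ j * B y).trace := by
    intro j x y
    rw [Finset.mul_sum, Matrix.trace_sum]
    have : ∀ i, (ρ j * ((ρ i * A x).trace * (ρ i * B y).trace) • E i).trace
        = ((ρ i * A x).trace * (ρ i * B y).trace) * (if j = i then 1 else 0) := by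
      intro i
      rw [Matrix.mul_smul, Matrix.trace_smul, smul_eq_mul, hdist j i]
    simp_rw [this, mul_ite, mul_one, mul_zero]
    simp
  refine ⟨⟨fun p => ?_, ?_⟩, fun j => ⟨fun x => ?_, fun y => ?_⟩⟩
  · refine Finset.sum_induction _ _ (fun a b ha hb => ha.add hb) Matrix.PosSemidef.zero
      (fun i _ => ?_)
    exact psd_smul (hE.1 i)
      (mul_nonneg (trace_mul_psd_nonneg (hρ i).1 (hA.1 p.1))
        (trace_mul_psd_nonneg (hρ i).1 (hB.1 p.2)))
  · rw [Finset.sum_comm]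
    have : ∀ i : Fin k,
        ∑ p : X × Y, ((ρ i * A p.1).trace * (ρ i * B p.2).trace) • E i = E i := by
      intro i
      rw [← Finset.sum_smul]
      have : ∑ p : X × Y, (ρ i * A p.1).trace * (ρ i * B p.2).trace = 1 := by
        rw [Fintype.sum_prod_type]
        simp_rw [← Finset.mul_sum]
        rw [← Finset.sum_mul, hcsum i, hdsum i, one_mul]
      rw [this, one_smul]
    simp_rw [this]
    exact hE.2
  · simp_rw [hterm j]
    rw [← Finset.mul_sum, hdsum j, mul_one]
  · simp_rw [hterm j]
    rw [← Finset.sum_mul, hcsum j, one_mul]
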